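/- Let (X, ι_X, L_X) be a Bachmann-Howard system for a prae-dilator T and ϑ_X : T_X → ϑ_T(X) the map σ ↦ ϑσ. Then for every σ ∈ T_X we have [ι_X]^{<ω}(supp^T_X(σ)) <^fin_{ϑ_T(X)} ϑ_X(σ), i.e., ι_X(x) <_{ϑ_T(X)} ϑσ for every x ∈ supp^T_X(σ). -/
import Mathlib


/-! Data for a Bachmann-Howard system: `X` is a linear order, `S` is the linear order
`T_X` (the value of a prae-dilator at `X`), whose elements `σ` simultaneously index the
terms `ϑσ` making up the set `ϑ_T(X)`.  So `supp : S → Finset X` is the support function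
`supp^T_X`, `ι : X → S` is the function `ι_X : X → ϑ_T(X)` (identifying terms with their
indices), and `L : X → ℕ` is the length function `L_X`. -/
structure BHData (X S : Type) [LinearOrder X] [LinearOrder S] where
  supp : S → Finset X
  ι : X → S
  L : X → ℕ

variable {X S : Type} [LinearOrder X] [LinearOrder S]

/-- The induced length function `L_{ϑ_T(X)}(ϑσ) = max{L_X(x) | x ∈ supp σ} + 1`
(with the maximum over the empty set being `0`). -/
def BHData.Lv (D : BHData X S) (σ : S) : ℕ := (D.supp σ).sup D.L + 1

/-- `(X, ι, L)` is a Bachmann-Howard system: `L_{ϑ_T(X)} ∘ ι_X = L_X`. -/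
def BHData.IsBH (D : BHData X S) : Prop := ∀ x : X, D.Lv (D.ι x) = D.L x

/-- The recursively defined relation `ϑσ <_{ϑ_T(X)} ϑτ`: either
(i) `σ <_{T_X} τ` and `ι_X(x) < ϑτ` for all `x ∈ supp σ`, or
(ii) `τ <_{T_X} σ` and `ϑσ ≤ ι_X(x)` for some `x ∈ supp τ`
(the clause (ii) is split according to `ϑσ < ι_X(x)` or `ϑσ = ι_X(x)`).
For a Bachmann-Howard system this least fixed point satisfies the defining
recursion, which is well-founded along `Lv`. -/
inductive BHData.lt (D : BHData X S) : S → S → Prop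
  | left {σ τ : S} : σ < τ → (∀ x ∈ D.supp σ, D.lt (D.ι x) τ) → D.lt σ τ
  | right_lt {σ τ : S} (x : X) : τ < σ → x ∈ D.supp τ → D.lt σ (D.ι x) → D.lt σ τ
  | right_eq {σ τ : S} (x : X) : τ < σ → x ∈ D.supp τ → σ = D.ι x → D.lt σ τ

/-- Hereditary membership in the support of `σ`, with explicit depth: `Her 0 x σ` means
`x ∈ supp σ`, and at depth `n+1` we have `Her n x (ι y)` for some `y ∈ supp σ`. -/
inductive BHData.Her (D : BHData X S) : ℕ → X → S → Prop
  | base {x : X} {σ : S} : x ∈ D.supp σ → D.Her 0 x σ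
  | step {n : ℕ} {x y : X} {σ : S} : D.Her n x (D.ι y) → y ∈ D.supp σ → D.Her (n + 1) x σ

lemma BHData.Her.of_supp {D : BHData X S} {n : ℕ} {x z : X} {σ : S}
    (h : D.Her n x σ) (hz : z ∈ D.supp (D.ι x)) : D.Her (n + 1) z σ := by
  induction h with
  | base hx => exact .step (.base hz) hx
  | step h hy ih => exact .step (ih hz) hy

lemma BHData.Her.lt_Lv {D : BHData X S} (hD : D.IsBH) {n : ℕ} {x : X} {σ : S}
    (h : D.Her n x σ) : D.L x < D.Lv σ := by
  induction h with
  | base hx => exact Nat.lt_succ_of_le (Finset.le_sup hx)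
  | @step m x' y σ' h hy ih =>
    have h1 : D.L x' < D.L y := (hD y) ▸ ih
    have h2 : D.L y ≤ (D.supp σ').sup D.L := Finset.le_sup hy
    have : D.Lv σ' = (D.supp σ').sup D.L + 1 := rfl
    omega

lemma BHData.lt_of_her (D : BHData X S) (hD : D.IsBH) :
    ∀ a b : ℕ, ∀ (x : X) (σ : S) (n : ℕ), D.L x = a → n = b → D.Her n x σ →
      D.lt (D.ι x) σ := by
  intro a
  induction a using Nat.strong_induction_on with
  | _ a IH1 =>
  intro b
  induction b using Nat.strong_induction_on with
  | _ b IH2 =>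
  intro x σ n hLx hn hher
  rcases lt_trichotomy (D.ι x) σ with hcmp | hcmp | hcmp
  · refine BHData.lt.left hcmp (fun z hz => ?_)
    have hLz : D.L z < D.L x := by
      have h1 : D.L z ≤ (D.supp (D.ι x)).sup D.L := Finset.le_sup hz
      have h2 : (D.supp (D.ι x)).sup D.L + 1 = D.L x := hD x
      omega
    exact IH1 (D.L z) (hLx ▸ hLz) (n + 1) z σ (n + 1) rfl rfl (hher.of_supp hz)
  · exfalso
    have h1 : D.L x < D.Lv σ := hher.lt_Lv hD
    rw [← hcmp, hD x] at h1
    exact lt_irrefl _ h1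
  · cases hher with
    | base hx => exact BHData.lt.right_eq x hcmp hx rfl
    | @step m _ y _ h hy =>
      exact BHData.lt.right_lt y hcmp hy
        (IH2 m (by omega) x (D.ι y) m hLx rfl h)

/-- `[ι_X]^{<ω}(supp σ) <^fin ϑσ`: every `ι_X(x)` with `x ∈ supp σ` lies strictly
below `ϑσ` in the collapse order. -/
theorem BHData.supp_lt_collapse (D : BHData X S) (hD : D.IsBH) :
    ∀ σ : S, ∀ x ∈ D.supp σ, D.lt (D.ι x) σ := by
  intro σ x hx
  exact D.lt_of_her hD (D.L x) 0 x σ 0 rfl rfl (BHData.Her.base hx)
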